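/- Let ℋ be a real Hilbert space with scalar product (·,·)_ℋ and let T > 0. Let k be absolutely continuous on [0,T] with derivative k̇ ∈ L₁(0,T), and let v ∈ L₂((0,T);ℋ). Then for almost every t ∈ (0,T): (∂_t(k ∗ v)(t), v(t))_ℋ = (1/2)·∂_t(k ∗ ‖v(·)‖²_ℋ)(t) + (1/2)·k(t)·‖v(t)‖²_ℋ + (1/2)·∫₀ᵗ (−k̇(s))·‖v(t) − v(t−s)‖²_ℋ ds. -/

import Mathlib

open MeasureTheory Set
open scoped RealInnerProductSpace

/-- **The Hilbert space fundamental identity** basic to energy estimates: for a real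
Hilbert space `ℋ`, a kernel `k ∈ H¹₁((0,T))` with derivative `kdot` (so that
`∂ₜ(k ∗ w)(t) = k(0) w(t) + ∫₀ᵗ kdot(s) w(t-s) ds`), and `v ∈ L₂((0,T);ℋ)`,
for a.e. `t ∈ (0,T)`:
`(∂ₜ(k ∗ v)(t), v(t))_ℋ = ½ ∂ₜ(k ∗ ‖v(·)‖²)(t) + ½ k(t) ‖v(t)‖² + ½ ∫₀ᵗ (-kdot(s)) ‖v(t)-v(t-s)‖² ds`. -/
theorem hilbert_fundamental_identity
    {ℋ : Type*} [NormedAddCommGroup ℋ] [InnerProductSpace ℝ ℋ] [CompleteSpace ℋ]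
    (T : ℝ) (hT : 0 < T)
    (k kdot : ℝ → ℝ)
    (hkdot : IntegrableOn kdot (Ioo 0 T))
    (hk : ∀ t ∈ Icc 0 T, k t = k 0 + ∫ s in (0:ℝ)..t, kdot s)
    (v : ℝ → ℋ)
    (hv : MemLp v 2 (volume.restrict (Ioo 0 T))) :
    ∀ᵐ t ∂(volume.restrict (Ioo 0 T)),
      ⟪k 0 • v t + ∫ s in (0:ℝ)..t, kdot s • v (t - s), v t⟫
        = (1/2 : ℝ) * (k 0 * ‖v t‖ ^ 2 + ∫ s in (0:ℝ)..t, kdot s * ‖v (t - s)‖ ^ 2)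
          + (1/2 : ℝ) * k t * ‖v t‖ ^ 2
          + (1/2 : ℝ) * ∫ s in (0:ℝ)..t, (-(kdot s)) * ‖v t - v (t - s)‖ ^ 2 := by
  haveI : IsFiniteMeasure (volume.restrict (Ioo (0:ℝ) T)) :=
    ⟨by rw [Measure.restrict_apply_univ]; exact measure_Ioo_lt_top⟩
  set K : ℝ → ℝ := (Ioo (0:ℝ) T).indicator kdot with hKdef
  set V : ℝ → ℋ := (Ioo (0:ℝ) T).indicator v with hVdef
  set G : ℝ → ℝ := (Ioo (0:ℝ) T).indicator (fun t => ‖v t‖ ^ 2) with hGdef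
  have hKint : Integrable K volume := hkdot.integrable_indicator measurableSet_Ioo
  have hvi : IntegrableOn v (Ioo 0 T) volume :=
    memLp_one_iff_integrable.mp (hv.mono_exponent (by norm_num))
  have hVint : Integrable V volume := hvi.integrable_indicator measurableSet_Ioo
  have hgi : IntegrableOn (fun t => ‖v t‖ ^ 2) (Ioo 0 T) volume := hv.norm.integrable_sq
  have hGint : Integrable G volume := hgi.integrable_indicator measurableSet_Ioo
  have h1 : Integrable (fun p : ℝ × ℝ => K p.2 • V (p.1 - p.2)) (volume.prod volume) :=
    hKint.convolution_integrand (ContinuousLinearMap.lsmul ℝ ℝ) hVint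
  have h2 : Integrable (fun p : ℝ × ℝ => K p.2 * G (p.1 - p.2)) (volume.prod volume) :=
    hKint.convolution_integrand (ContinuousLinearMap.mul ℝ ℝ) hGint
  have h1ae : ∀ᵐ t ∂(volume.restrict (Ioo (0:ℝ) T)),
      Integrable (fun s => K s • V (t - s)) volume :=
    ae_restrict_of_ae h1.prod_right_ae
  have h2ae : ∀ᵐ t ∂(volume.restrict (Ioo (0:ℝ) T)),
      Integrable (fun s => K s * G (t - s)) volume :=
    ae_restrict_of_ae h2.prod_right_ae
  filter_upwards [h1ae, h2ae, ae_restrict_mem measurableSet_Ioo] with t h1t h2t ht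
  obtain ⟨ht0, htT⟩ := ht
  -- the indicator functions agree with the original ones on `Ioo 0 t`
  have hsub : Ioo (0:ℝ) t ⊆ Ioo 0 T := Ioo_subset_Ioo le_rfl htT.le
  have hmem : ∀ s ∈ Ioo (0:ℝ) t, t - s ∈ Ioo (0:ℝ) T := fun s hs =>
    ⟨by linarith [hs.2], by linarith [hs.1]⟩
  -- integrability on `Ioo 0 t`
  have hI1 : IntegrableOn (fun s => kdot s • v (t - s)) (Ioo 0 t) volume := by
    refine (h1t.integrableOn).congr_fun (fun s hs => ?_) measurableSet_Ioo
    beta_reduce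
    rw [hKdef, hVdef, indicator_of_mem (hsub hs), indicator_of_mem (hmem s hs)]
  have hI2 : IntegrableOn (fun s => kdot s * ‖v (t - s)‖ ^ 2) (Ioo 0 t) volume := by
    refine (h2t.integrableOn).congr_fun (fun s hs => ?_) measurableSet_Ioo
    beta_reduce
    rw [hKdef, hGdef, indicator_of_mem (hsub hs), indicator_of_mem (hmem s hs)]
  have hI3 : IntegrableOn (fun s => kdot s * ⟪v t, v (t - s)⟫) (Ioo 0 t) volume := by
    have := hI1.const_inner (𝕜 := ℝ) (v t)
    simpa [IntegrableOn, real_inner_smul_right] using this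
  have hI0 : IntegrableOn kdot (Ioo 0 t) volume := hkdot.mono_set hsub
  -- interval integrals to set integrals over `Ioo 0 t`
  have hconv : ∀ (f : ℝ → ℋ), (∫ s in (0:ℝ)..t, f s) = ∫ s in Ioo (0:ℝ) t, f s := by
    intro f
    rw [intervalIntegral.integral_of_le ht0.le, integral_Ioc_eq_integral_Ioo]
  have hconvR : ∀ (f : ℝ → ℝ), (∫ s in (0:ℝ)..t, f s) = ∫ s in Ioo (0:ℝ) t, f s := by
    intro f
    rw [intervalIntegral.integral_of_le ht0.le, integral_Ioc_eq_integral_Ioo]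
  set B : ℝ := ∫ s in Ioo (0:ℝ) t, kdot s with hB
  set C : ℝ := ∫ s in Ioo (0:ℝ) t, kdot s * ⟪v t, v (t - s)⟫ with hC
  set D : ℝ := ∫ s in Ioo (0:ℝ) t, kdot s * ‖v (t - s)‖ ^ 2 with hD
  have e1 : ⟪k 0 • v t + ∫ s in (0:ℝ)..t, kdot s • v (t - s), v t⟫
      = k 0 * ‖v t‖ ^ 2 + C := by
    rw [inner_add_left, real_inner_smul_left, real_inner_self_eq_norm_sq,
      hconv (fun s => kdot s • v (t - s)), real_inner_comm, ← integral_inner hI1]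
    congr 1
    exact integral_congr_ae (Filter.Eventually.of_forall fun s => real_inner_smul_right _ _ _)
  have e2 : (∫ s in (0:ℝ)..t, kdot s * ‖v (t - s)‖ ^ 2) = D :=
    hconvR _
  have e3 : k t = k 0 + B := by
    rw [hk t ⟨ht0.le, htT.le⟩, hconvR kdot]
  have e4 : (∫ s in (0:ℝ)..t, (-(kdot s)) * ‖v t - v (t - s)‖ ^ 2)
      = -(B * ‖v t‖ ^ 2) + 2 * C - D := by
    rw [hconvR]
    have step : (∫ s in Ioo (0:ℝ) t, (-(kdot s)) * ‖v t - v (t - s)‖ ^ 2)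
        = ∫ s in Ioo (0:ℝ) t,
            (-(kdot s * ‖v t‖ ^ 2) + (2 * (kdot s * ⟪v t, v (t - s)⟫) - kdot s * ‖v (t - s)‖ ^ 2)) := by
      refine integral_congr_ae (Filter.Eventually.of_forall fun s => ?_)
      simp only [norm_sub_sq_real]; ring
    have i1 : Integrable (fun s => -(kdot s * ‖v t‖ ^ 2)) (volume.restrict (Ioo 0 t)) :=
      (hI0.mul_const _).neg
    have i3 : Integrable (fun s => 2 * (kdot s * ⟪v t, v (t - s)⟫))
        (volume.restrict (Ioo 0 t)) := hI3.const_mul 2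
    have i2 : Integrable
        (fun s => 2 * (kdot s * ⟪v t, v (t - s)⟫) - kdot s * ‖v (t - s)‖ ^ 2)
        (volume.restrict (Ioo 0 t)) := i3.sub hI2
    rw [step, integral_add i1 i2, integral_neg, integral_sub i3 hI2,
      integral_const_mul, integral_mul_const, hB, hC, hD]
    ring
  rw [e1, e2, e3, e4]
  ring
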